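/- Let β>0, ξ≥0, μ>0, γ>0, ρ>0, κ>0, ν>0, α>1, ω>1, and let J₀ be the 4×4 real matrix [[-μ, -β, ωκ, -βξ], [0, β-(γ+μ), 0, βξ], [-ακ, -ακ, -(ακ+ωκ+μ), -ακ], [0, 0, 0, -(ρ+μ)]] (the Jacobian of the reduced SIRWJS system at the disease free equilibrium (1,0,0,0)). Then the characteristic polynomial of J₀ factors as (λ - (β-γ-μ))(λ + ακ + μ)(λ + ωκ + μ)(λ + ρ + μ); in particular the eigenvalues of J₀ are β-(γ+μ), -(ακ+μ), -(ωκ+μ), -(ρ+μ), and all eigenvalues are negative if and only if β < γ+μ (i.e. R₀ = β/(γ+μ) < 1). -/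

import Mathlib

open Matrix


set_option maxHeartbeats 1000000

private lemma det4_aux (a b c d e f g h i j k l m n o p : ℝ) :
    (!![a,b,c,d;e,f,g,h;i,j,k,l;m,n,o,p] : Matrix (Fin 4) (Fin 4) ℝ).det =
    a*(f*(k*p-l*o)-g*(j*p-l*n)+h*(j*o-k*n))
    - b*(e*(k*p-l*o)-g*(i*p-l*m)+h*(i*o-k*m))
    + c*(e*(j*p-l*n)-f*(i*p-l*m)+h*(i*n-j*m))
    - d*(e*(j*o-k*n)-f*(i*o-k*m)+g*(i*n-j*m)) := by
  simp [Matrix.det_succ_row_zero, Fin.sum_univ_succ, Fin.succAbove,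
    Fin.castSucc, Fin.castAdd, Fin.castLE]
  ring

private lemma sub_smul_one_eq (A : Matrix (Fin 4) (Fin 4) ℝ) (l : ℝ)
    (a b c d e f g h i j k l' m n o p : ℝ)
    (hA : A = !![a,b,c,d;e,f,g,h;i,j,k,l';m,n,o,p]) :
    A - l • (1 : Matrix (Fin 4) (Fin 4) ℝ) =
    !![a-l,b,c,d;e,f-l,g,h;i,j,k-l,l';m,n,o,p-l] := by
  subst hA
  ext i j
  fin_cases i <;> fin_cases j <;>
    simp [Matrix.sub_apply, Matrix.one_apply]

/-- The characteristic polynomial of the Jacobian of the reduced SIRWJS system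
at the disease free equilibrium factors as
`(λ-(β-γ-μ))(λ+ακ+μ)(λ+ωκ+μ)(λ+ρ+μ)`; its eigenvalues are `β-(γ+μ)`,
`-(ακ+μ)`, `-(ωκ+μ)`, `-(ρ+μ)`, and all of them are negative iff
`β < γ+μ` (i.e. `R₀ < 1`). -/
theorem sirwjs_DFE_jacobian_eigenvalues
    (β ξ μ γ ρ κ ν α ω : ℝ)
    (hβ : 0 < β) (hξ : 0 ≤ ξ) (hμ : 0 < μ) (hγ : 0 < γ) (hρ : 0 < ρ)
    (hκ : 0 < κ) (hν : 0 < ν) (hα : 1 < α) (hω : 1 < ω)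
    (J₀ : Matrix (Fin 4) (Fin 4) ℝ)
    (hJ₀ : J₀ = !![-μ, -β, ω * κ, -β * ξ;
                   0, β - (γ + μ), 0, β * ξ;
                   -α * κ, -α * κ, -(α * κ + ω * κ + μ), -α * κ;
                   0, 0, 0, -(ρ + μ)]) :
    (∀ l : ℝ, (l • (1 : Matrix (Fin 4) (Fin 4) ℝ) - J₀).det =
      (l - (β - γ - μ)) * (l + α * κ + μ) * (l + ω * κ + μ) * (l + ρ + μ)) ∧
    (∀ l : ℝ, (J₀ - l • (1 : Matrix (Fin 4) (Fin 4) ℝ)).det = 0 ↔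
      l = β - (γ + μ) ∨ l = -(α * κ + μ) ∨ l = -(ω * κ + μ) ∨ l = -(ρ + μ)) ∧
    ((∀ l : ℝ, (J₀ - l • (1 : Matrix (Fin 4) (Fin 4) ℝ)).det = 0 → l < 0) ↔
      β < γ + μ) := by

  subst hJ₀
  have hdet : ∀ l : ℝ,
      ((!![-μ, -β, ω * κ, -β * ξ;
           0, β - (γ + μ), 0, β * ξ;
           -α * κ, -α * κ, -(α * κ + ω * κ + μ), -α * κ;
           0, 0, 0, -(ρ + μ)] : Matrix (Fin 4) (Fin 4) ℝ)
        - l • (1 : Matrix (Fin 4) (Fin 4) ℝ)).det =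
      ((β - (γ + μ)) - l) * ((-(α * κ + μ)) - l) * ((-(ω * κ + μ)) - l) * ((-(ρ + μ)) - l) := by
    intro l
    rw [sub_smul_one_eq _ l _ _ _ _ _ _ _ _ _ _ _ _ _ _ _ _ rfl, det4_aux]
    ring
  refine ⟨?_, ?_, ?_⟩
  · intro l
    have h : (l • (1 : Matrix (Fin 4) (Fin 4) ℝ) -
        (!![-μ, -β, ω * κ, -β * ξ;
           0, β - (γ + μ), 0, β * ξ;
           -α * κ, -α * κ, -(α * κ + ω * κ + μ), -α * κ;
           0, 0, 0, -(ρ + μ)] : Matrix (Fin 4) (Fin 4) ℝ))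
        = -((!![-μ, -β, ω * κ, -β * ξ;
           0, β - (γ + μ), 0, β * ξ;
           -α * κ, -α * κ, -(α * κ + ω * κ + μ), -α * κ;
           0, 0, 0, -(ρ + μ)] : Matrix (Fin 4) (Fin 4) ℝ)
          - l • (1 : Matrix (Fin 4) (Fin 4) ℝ)) := by abel
    rw [h, Matrix.det_neg, hdet l]
    simp
    ring
  · intro l
    rw [hdet l]
    constructor
    · intro h
      rcases mul_eq_zero.mp h with h | h
      · rcases mul_eq_zero.mp h with h | h
        · rcases mul_eq_zero.mp h with h | h
          · exact Or.inl (by linarith [sub_eq_zero.mp h])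
          · exact Or.inr (Or.inl (by linarith [sub_eq_zero.mp h]))
        · exact Or.inr (Or.inr (Or.inl (by linarith [sub_eq_zero.mp h])))
      · exact Or.inr (Or.inr (Or.inr (by linarith [sub_eq_zero.mp h])))
    · rintro (rfl | rfl | rfl | rfl) <;> ring
  · constructor
    · intro h
      have := h (β - (γ + μ)) (by rw [hdet]; ring)
      linarith
    · intro hb l hl
      rw [hdet l] at hl
      rcases mul_eq_zero.mp hl with h | h
      · rcases mul_eq_zero.mp h with h | h
        · rcases mul_eq_zero.mp h with h | h
          · nlinarith [sub_eq_zero.mp h]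
          · nlinarith [sub_eq_zero.mp h, mul_pos (by linarith : (0:ℝ) < α) hκ]
        · nlinarith [sub_eq_zero.mp h, mul_pos (by linarith : (0:ℝ) < ω) hκ]
      · nlinarith [sub_eq_zero.mp h]
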